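/- For hesitant fuzzy elements A₁ and A₂ with Torra union A₁ ∪ A₂: writing sequences in descending order, for each i ∈ {1,2}, the j-th largest element of A₁ ∪ A₂ is at least the j-th largest element of A_i for all j up to min(|A_i|, |A₁ ∪ A₂|) (so A_i ⊂_s (A₁ ∪ A₂) or A_i ⊂_t (A₁ ∪ A₂)). -/

import Mathlib

/-- Supremum (maximum) of a multiset of reals in `[0,1]`, defaulting to `0`. -/
noncomputable def msup (A : Multiset ℝ) : ℝ := A.toList.foldr max 0

/-- Infimum (minimum) of a multiset of reals in `[0,1]`, defaulting to `1`. -/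
noncomputable def minf (A : Multiset ℝ) : ℝ := A.toList.foldr min 1

/-- Mean of a multiset of reals. -/
noncomputable def mmean (A : Multiset ℝ) : ℝ := A.sum / A.card

/-- The elements of a multiset sorted in descending order. -/
noncomputable def dsort (A : Multiset ℝ) : List ℝ := (A.sort (· ≤ ·)).reverse

/-- `A ⊂ₛ B`: `|A| ≥ |B|` and the `i`-th largest element of `B` is at least the
`i`-th largest element of `A`, for `i ≤ |B|`. -/
noncomputable def subS (A B : Multiset ℝ) : Prop :=
  B.card ≤ A.card ∧ ∀ i < B.card, (dsort A).getD i 0 ≤ (dsort B).getD i 0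

/-- `A ⊂ₜ B`: `|A| < |B|` and the `i`-th largest element of `B` is at least the
`i`-th largest element of `A`, for `i ≤ |A|`. -/
noncomputable def subT (A B : Multiset ℝ) : Prop :=
  A.card < B.card ∧ ∀ i < A.card, (dsort A).getD i 0 ≤ (dsort B).getD i 0

/-- Torra intersection of two hesitant fuzzy elements (as multisets). -/
noncomputable def tInter (A B : Multiset ℝ) : Multiset ℝ :=
  (A + B).filter (fun h => h ≤ min (msup A) (msup B))

/-- Torra union of two hesitant fuzzy elements (as multisets). -/
noncomputable def tUnion (A B : Multiset ℝ) : Multiset ℝ :=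
  (A + B).filter (fun h => max (minf A) (minf B) ≤ h)


private lemma dsort_coe (A : Multiset ℝ) : ((dsort A : List ℝ) : Multiset ℝ) = A := by
  simp [dsort, Multiset.sort_eq]

private lemma dsort_sorted (A : Multiset ℝ) : (dsort A).Pairwise (fun a b => b ≤ a) := by
  unfold dsort
  rw [List.pairwise_reverse]
  exact Multiset.pairwise_sort _ _

private lemma dsort_length (A : Multiset ℝ) : (dsort A).length = Multiset.card A := by
  simp [dsort]

private lemma count_lb (L : List ℝ) (hL : L.Pairwise (fun a b => b ≤ a)) {j : ℕ}
    (hj : j < L.length) :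
    j + 1 ≤ L.countP (fun x => decide (L.getD j 0 ≤ x)) := by
  have h1 : (L.take (j+1)).countP (fun x => decide (L.getD j 0 ≤ x))
      = (L.take (j+1)).length := by
    rw [List.countP_eq_length]
    intro a ha
    rw [List.mem_take_iff_getElem] at ha
    obtain ⟨i, hi, rfl⟩ := ha
    have hij : i ≤ j := by omega
    have hiL : i < L.length := by omega
    simp only [decide_eq_true_eq]
    rw [List.getD_eq_getElem L 0 hj]
    rcases lt_or_eq_of_le hij with h | h
    · have := hL.rel_get_of_lt (a := ⟨i, hiL⟩) (b := ⟨j, hj⟩) (by exact_mod_cast h)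
      simpa using this
    · subst h; exact le_refl _
  calc j + 1 = (L.take (j+1)).length := by rw [List.length_take]; omega
    _ = (L.take (j+1)).countP (fun x => decide (L.getD j 0 ≤ x)) := h1.symm
    _ ≤ L.countP (fun x => decide (L.getD j 0 ≤ x)) :=
        List.Sublist.countP_le (List.take_sublist (j+1) L)

private lemma count_ub (L : List ℝ) (hL : L.Pairwise (fun a b => b ≤ a)) {c : ℝ} {j : ℕ}
    (hj : j < L.length) (hc : j + 1 ≤ L.countP (fun x => decide (c ≤ x))) :
    c ≤ L.getD j 0 := by
  by_contra h
  push_neg at h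
  rw [List.getD_eq_getElem L 0 hj] at h
  have hdrop : (L.drop j).countP (fun x => decide (c ≤ x)) = 0 := by
    rw [List.countP_eq_zero]
    intro a ha
    rw [List.drop_eq_getElem_cons hj] at ha
    simp only [decide_eq_true_eq, not_le]
    rcases List.mem_cons.mp ha with rfl | ha
    · exact h
    · have hpw : List.Pairwise (fun a b => b ≤ a) (L[j] :: L.drop (j+1)) := by
        rw [← List.drop_eq_getElem_cons hj]
        exact List.Pairwise.sublist (List.drop_sublist j L) hL
      have := List.rel_of_pairwise_cons hpw ha
      linarith
  have htake : (L.take j).countP (fun x => decide (c ≤ x)) ≤ j := by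
    calc (L.take j).countP _ ≤ (L.take j).length := List.countP_le_length
      _ ≤ j := by rw [List.length_take]; omega
  have : L.countP (fun x => decide (c ≤ x))
      = (L.take j).countP (fun x => decide (c ≤ x)) + (L.drop j).countP (fun x => decide (c ≤ x)) := by
    conv_lhs => rw [← List.take_append_drop j L]
    rw [List.countP_append]
  omega

private lemma key (V U : Multiset ℝ) (m : ℝ)
    (hsub : V.filter (fun x => m ≤ x) ≤ U) (hU : ∀ x ∈ U, m ≤ x)
    {j : ℕ} (hjV : j < Multiset.card V) (hjU : j < Multiset.card U) :
    (dsort V).getD j 0 ≤ (dsort U).getD j 0 := by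
  set c := (dsort V).getD j 0 with hcdef
  by_cases hmc : m ≤ c
  · have h1 : j + 1 ≤ V.countP (fun x => c ≤ x) := by
      rw [← dsort_coe V, Multiset.coe_countP]
      exact count_lb (dsort V) (dsort_sorted V) (by rwa [dsort_length])
    have h2 : V.countP (fun x => c ≤ x)
        = (V.filter (fun x => m ≤ x)).countP (fun x => c ≤ x) := by
      rw [Multiset.countP_filter]
      refine Multiset.countP_congr rfl fun x hx => ?_
      simp only [eq_iff_iff]
      exact ⟨fun hcx => ⟨hcx, le_trans hmc hcx⟩, fun hh => hh.1⟩
    have h3 : j + 1 ≤ U.countP (fun x => c ≤ x) :=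
      le_trans (h2 ▸ h1) (Multiset.countP_le_of_le _ hsub)
    refine count_ub (dsort U) (dsort_sorted U) (j := j) (by rwa [dsort_length]) ?_
    rw [← Multiset.coe_countP, dsort_coe]
    exact h3
  · push_neg at hmc
    have hjU' : j < (dsort U).length := by rwa [dsort_length]
    have hmem : (dsort U).getD j 0 ∈ U := by
      rw [List.getD_eq_getElem _ 0 hjU']
      have h2 : (dsort U)[j] ∈ ((dsort U : List ℝ) : Multiset ℝ) :=
        Multiset.mem_coe.mpr (List.getElem_mem hjU')
      rwa [dsort_coe] at h2
    exact le_of_lt (lt_of_lt_of_le hmc (hU _ hmem))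


theorem stmt9 (A₁ A₂ : Multiset ℝ) (hA₁ : A₁ ≠ 0) (hA₂ : A₂ ≠ 0)
    (hA₁1 : ∀ x ∈ A₁, x ∈ Set.Icc (0:ℝ) 1) (hA₂1 : ∀ x ∈ A₂, x ∈ Set.Icc (0:ℝ) 1) :
    (∀ j < min A₁.card (tUnion A₁ A₂).card,
      (dsort A₁).getD j 0 ≤ (dsort (tUnion A₁ A₂)).getD j 0) ∧
    (∀ j < min A₂.card (tUnion A₁ A₂).card,
      (dsort A₂).getD j 0 ≤ (dsort (tUnion A₁ A₂)).getD j 0) ∧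
    (subS A₁ (tUnion A₁ A₂) ∨ subT A₁ (tUnion A₁ A₂)) ∧
    (subS A₂ (tUnion A₁ A₂) ∨ subT A₂ (tUnion A₁ A₂)) := by
  set m := max (minf A₁) (minf A₂) with hm
  set U := tUnion A₁ A₂ with hUdef
  have hU : ∀ x ∈ U, m ≤ x := fun x hx => Multiset.of_mem_filter hx
  have hsub1 : A₁.filter (fun x => m ≤ x) ≤ U := by
    rw [hUdef, tUnion, Multiset.filter_add]
    exact Multiset.le_add_right _ _
  have hsub2 : A₂.filter (fun x => m ≤ x) ≤ U := by
    rw [hUdef, tUnion, Multiset.filter_add]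
    exact Multiset.le_add_left _ _
  have P1 : ∀ j < min (Multiset.card A₁) (Multiset.card U),
      (dsort A₁).getD j 0 ≤ (dsort U).getD j 0 := fun j hj =>
    key A₁ U m hsub1 hU (lt_min_iff.mp hj).1 (lt_min_iff.mp hj).2
  have P2 : ∀ j < min (Multiset.card A₂) (Multiset.card U),
      (dsort A₂).getD j 0 ≤ (dsort U).getD j 0 := fun j hj =>
    key A₂ U m hsub2 hU (lt_min_iff.mp hj).1 (lt_min_iff.mp hj).2
  refine ⟨P1, P2, ?_, ?_⟩
  · rcases le_or_gt (Multiset.card U) (Multiset.card A₁) with h | h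
    · exact Or.inl ⟨h, fun i hi => P1 i (lt_min_iff.mpr ⟨lt_of_lt_of_le hi h, hi⟩)⟩
    · exact Or.inr ⟨h, fun i hi => P1 i (lt_min_iff.mpr ⟨hi, lt_trans hi h⟩)⟩
  · rcases le_or_gt (Multiset.card U) (Multiset.card A₂) with h | h
    · exact Or.inl ⟨h, fun i hi => P2 i (lt_min_iff.mpr ⟨lt_of_lt_of_le hi h, hi⟩)⟩
    · exact Or.inr ⟨h, fun i hi => P2 i (lt_min_iff.mpr ⟨hi, lt_trans hi h⟩)⟩
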